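/- arXiv:0911.1802 — 2 statements merged into one kernel-verified Lean document; each statement's English description precedes it below -/
import Mathlib

section
/- Let K be a complete nonarchimedean field of residual characteristic p > 0 equipped with a derivation ∂ of rational type with rational parameter u, and let K^(∂) ⊆ K be the fixed field of the ℤ/pℤ-action x ↦ T(x; ∂; (ζ_p^i − 1)u) (assuming ζ_p ∈ K). Then the residue field of K^(∂) contains the p-th powers of the residue field of K, i.e., κ_{K^(∂)} ⊇ (κ_K)^p. -/
open Finset

section Aux

variable {K : Type*} [NormedField K]

lemma na_sum_le (hna : IsNonarchimedean fun x : K => ‖x‖) {ι : Type*} (s : Finset ι)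
    (f : ι → K) (C : ℝ) (hC : 0 ≤ C) (h : ∀ i ∈ s, ‖f i‖ ≤ C) :
    ‖∑ i ∈ s, f i‖ ≤ C := by
  induction s using Finset.cons_induction with
  | empty => simpa using hC
  | cons a s ha ih =>
    rw [Finset.sum_cons]
    refine (hna _ _).trans (max_le (h a (Finset.mem_cons_self a s)) ?_)
    exact ih fun i hi => h i (Finset.mem_cons_of_mem hi)

lemma na_nat_le_one (hna : IsNonarchimedean fun x : K => ‖x‖) (n : ℕ) :
    ‖(n : K)‖ ≤ 1 := by
  induction n with
  | zero => simp
  | succ n ih =>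
    push_cast
    exact (hna _ _).trans (max_le ih (by simp))

lemma na_tsum_le (hna : IsNonarchimedean fun x : K => ‖x‖) {ι : Type*} (f : ι → K)
    (C : ℝ) (hC : 0 ≤ C) (h : ∀ i, ‖f i‖ ≤ C) : ‖∑' i, f i‖ ≤ C := by
  by_cases hs : Summable f
  · have ht := hs.hasSum
    have : Filter.Tendsto (fun s : Finset ι => ‖∑ i ∈ s, f i‖) Filter.atTop (nhds ‖∑' i, f i‖) :=
      (continuous_norm.tendsto _).comp ht
    exact le_of_tendsto' this fun s => na_sum_le hna s f C hC fun i _ => h i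
  · rw [tsum_eq_zero_of_not_summable hs]
    simpa using hC

lemma na_prod_sub_prod (hna : IsNonarchimedean fun x : K => ‖x‖) {ι : Type*} (s : Finset ι)
    (f g : ι → K) (ε : ℝ) (hε : 0 ≤ ε) (hf : ∀ i ∈ s, ‖f i‖ ≤ 1) (hg : ∀ i ∈ s, ‖g i‖ ≤ 1)
    (hfg : ∀ i ∈ s, ‖f i - g i‖ ≤ ε) :
    ‖∏ i ∈ s, f i - ∏ i ∈ s, g i‖ ≤ ε := by
  induction s using Finset.cons_induction with
  | empty => simpa using hε
  | cons a s ha ih =>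
    rw [Finset.prod_cons, Finset.prod_cons]
    have key : f a * ∏ i ∈ s, f i - g a * ∏ i ∈ s, g i
        = f a * (∏ i ∈ s, f i - ∏ i ∈ s, g i) + (f a - g a) * ∏ i ∈ s, g i := by ring
    rw [key]
    refine (hna _ _).trans (max_le ?_ ?_)
    · beta_reduce
      rw [norm_mul]
      calc ‖f a‖ * ‖∏ i ∈ s, f i - ∏ i ∈ s, g i‖
          ≤ 1 * ε := by
            refine mul_le_mul (hf a (Finset.mem_cons_self a s)) ?_ (norm_nonneg _) zero_le_one
            exact ih (fun i hi => hf i (Finset.mem_cons_of_mem hi))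
              (fun i hi => hg i (Finset.mem_cons_of_mem hi))
              (fun i hi => hfg i (Finset.mem_cons_of_mem hi))
        _ = ε := one_mul ε
    · beta_reduce
      rw [norm_mul]
      have hgs : ‖∏ i ∈ s, g i‖ ≤ 1 := by
        rw [norm_prod]
        exact Finset.prod_le_one (fun i _ => norm_nonneg _)
          (fun i hi => hg i (Finset.mem_cons_of_mem hi))
      calc ‖f a - g a‖ * ‖∏ i ∈ s, g i‖ ≤ ε * 1 :=
            mul_le_mul (hfg a (Finset.mem_cons_self a s)) hgs (norm_nonneg _) hε
        _ = ε := mul_one ε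

end Aux


set_option maxHeartbeats 1000000 in
/-- **The residue field of the Frobenius subfield contains the `p`-th powers
of the residue field** (Lemma L:Frob-does-to-kappa).
Let `K` be a complete nonarchimedean field of characteristic `0` with residue
field of characteristic `p > 0` (i.e. `‖p‖ < 1`), equipped with a derivation
`der` of rational type with rational parameter `u` (so `der u = 1`,
`‖der x‖ ≤ ‖u‖⁻¹‖x‖` and `‖der^n x / n!‖ ≤ ‖u‖⁻ⁿ‖x‖`), and containing a
primitive `p`-th root of unity `ζ`.  Let `σ : ℤ/pℤ → Aut(K)` be the action by
`der`-Taylor series `σᵢ(x) = T(x; der; (ζ^i − 1)u)`, and let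
`K^{(der)} = {y : ∀ i, σᵢ y = y}` be its fixed field.  Then the residue field
of `K^{(der)}` contains `(κ_K)^p`:  for every `x ∈ 𝒪_K` there exists
`y ∈ K^{(der)} ∩ 𝒪_K` with `‖x^p − y‖ < 1`, i.e. the residue of `x^p` lies in
the residue field of `K^{(der)}`. -/
theorem residue_field_of_frobenius_fixed_field_contains_pth_powers
    (K : Type*) [NontriviallyNormedField K] [CompleteSpace K] [CharZero K]
    (hna : IsNonarchimedean fun x : K => ‖x‖)
    (p : ℕ) (hp : p.Prime) (hpnorm : ‖(p : K)‖ < 1)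
    (der : K → K)
    (hadd : ∀ x y : K, der (x + y) = der x + der y)
    (hmul : ∀ x y : K, der (x * y) = x * der y + y * der x)
    (u : K) (hu0 : u ≠ 0) (hdu : der u = 1)
    (hbound : ∀ x : K, ‖der x‖ ≤ ‖u‖⁻¹ * ‖x‖)
    (hdiv : ∀ (n : ℕ) (x : K),
      ‖(n.factorial : K)⁻¹ * (der^[n] x)‖ ≤ (‖u‖⁻¹) ^ n * ‖x‖)
    (ζ : K) (hζ : IsPrimitiveRoot ζ p)
    (σ : ZMod p → K ≃+* K)
    (hσ : ∀ (i : ZMod p) (x : K),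
      σ i x = ∑' n : ℕ, (n.factorial : K)⁻¹ * (der^[n] x) * ((ζ ^ i.val - 1) * u) ^ n) :
    ∀ x : K, ‖x‖ ≤ 1 →
      ∃ y : K, (∀ i : ZMod p, σ i y = y) ∧ ‖y‖ ≤ 1 ∧ ‖x ^ p - y‖ < 1 := by
  haveI : NeZero p := ⟨hp.ne_zero⟩
  have hp1 : 1 ≤ p := hp.one_lt.le
  have hu : (0:ℝ) < ‖u‖ := norm_pos_iff.mpr hu0
  have hζp : ζ ^ p = 1 := hζ.pow_eq_one
  have hζ0 : ζ ≠ 0 := by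
    intro h
    rw [h, zero_pow hp.ne_zero] at hζp
    exact zero_ne_one hζp
  -- ‖ζ‖ = 1
  have hnζ : ‖ζ‖ = 1 := by
    have h1 : ‖ζ‖ ^ p = 1 := by rw [← norm_pow, hζp, norm_one]
    rcases lt_trichotomy ‖ζ‖ 1 with h | h | h
    · have := pow_lt_one₀ (norm_nonneg ζ) h hp.ne_zero
      rw [h1] at this; exact absurd this (lt_irrefl 1)
    · exact h
    · have := one_lt_pow₀ h hp.ne_zero
      rw [h1] at this; exact absurd this (lt_irrefl 1)
  have hnζpow : ∀ k : ℕ, ‖ζ ^ k‖ = 1 := fun k => by rw [norm_pow, hnζ, one_pow]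
  -- derivation basics
  have hder1 : der 1 = 0 := by
    have h := hmul 1 1
    rw [one_mul, one_mul] at h
    have h2 : der 1 + der 1 = der 1 + 0 := by rw [add_zero]; exact h.symm
    exact add_left_cancel h2
  have hder0 : der 0 = 0 := by
    have h := hadd 0 0
    rw [add_zero] at h
    have h2 : der 0 + der 0 = der 0 + 0 := by rw [add_zero]; exact h.symm
    exact add_left_cancel h2
  have hiter0 : ∀ n : ℕ, der^[n] (0:K) = 0 := by
    intro n
    induction n with
    | zero => simp
    | succ n ih => rw [Function.iterate_succ_apply, hder0, ih]
  -- power rule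
  have hpowrule : ∀ (z : K) (n : ℕ), der (z ^ (n+1)) = (n+1 : ℕ) * z ^ n * der z := by
    intro z n
    induction n with
    | zero => simp
    | succ n ih =>
      have : z ^ (n+2) = z ^ (n+1) * z := by ring
      rw [this, hmul, ih]
      push_cast
      ring
  -- der ζ = 0
  have hderζ : der ζ = 0 := by
    have h := hpowrule ζ (p - 1)
    rw [Nat.sub_add_cancel hp1, hζp, hder1] at h
    have hp0 : ((p : ℕ) : K) ≠ 0 := Nat.cast_ne_zero.mpr hp.ne_zero
    have hζpow : ζ ^ (p - 1) ≠ 0 := pow_ne_zero _ hζ0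
    rcases mul_eq_zero.mp h.symm with h' | h'
    · rcases mul_eq_zero.mp h' with h'' | h''
      · exact absurd h'' hp0
      · exact absurd h'' hζpow
    · exact h'
  have hiterζ : ∀ n : ℕ, der^[n + 1] ζ = 0 := by
    intro n
    rw [Function.iterate_succ_apply, hderζ, hiter0]
  -- t := ‖ζ - 1‖ < 1
  set t : ℝ := ‖ζ - 1‖ with htdef
  have ht0 : 0 ≤ t := norm_nonneg _
  have ht1 : t ≤ 1 := by
    have : ζ - 1 = ζ + (-1) := by ring
    rw [htdef, this]
    refine (hna _ _).trans (max_le ?_ ?_) <;> simp [hnζ]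
  have htlt : t < 1 := by
    -- (ζ - 1)^p = - ∑_{k<p-1} (ζ-1)^(k+1) * C(p,k+1)
    have hbin : ((ζ - 1) + 1) ^ p = 1 := by rw [sub_add_cancel, hζp]
    rw [add_pow] at hbin
    simp only [one_pow, mul_one] at hbin
    rw [Finset.sum_range_succ' _ p] at hbin
    simp only [pow_zero, Nat.choose_zero_right, Nat.cast_one, one_mul] at hbin
    have hsum0 : ∑ k ∈ Finset.range p, (ζ - 1) ^ (k+1) * (p.choose (k+1) : K) = 0 := by
      have := hbin
      linear_combination this
    rw [show p = (p - 1) + 1 by omega, Finset.sum_range_succ] at hsum0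
    rw [show (p - 1) + 1 = p by omega] at hsum0
    simp only [Nat.choose_self, Nat.cast_one, mul_one] at hsum0
    have hkey : (ζ - 1) ^ p = -∑ k ∈ Finset.range (p - 1), (ζ - 1) ^ (k+1) * (p.choose (k+1) : K) := by
      linear_combination hsum0
    have hnormsum : ‖∑ k ∈ Finset.range (p - 1), (ζ - 1) ^ (k+1) * (p.choose (k+1) : K)‖
        ≤ ‖(p : K)‖ * t := by
      refine na_sum_le hna _ _ _ (mul_nonneg (norm_nonneg _) ht0) ?_
      intro k hk
      rw [Finset.mem_range] at hk
      have hdvd : p ∣ p.choose (k+1) :=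
        Nat.Prime.dvd_choose_self hp (Nat.succ_ne_zero k) (by omega)
      obtain ⟨m, hm⟩ := hdvd
      rw [norm_mul, hm]
      push_cast
      rw [norm_mul]
      calc ‖(ζ - 1) ^ (k+1)‖ * (‖(p:K)‖ * ‖(m:K)‖)
          ≤ t * (‖(p:K)‖ * 1) := by
            refine mul_le_mul ?_ ?_ (by positivity) ht0
            · rw [norm_pow]
              calc t ^ (k+1) ≤ t ^ 1 := pow_le_pow_of_le_one ht0 ht1 (by omega)
                _ = t := pow_one t
            · exact mul_le_mul_of_nonneg_left (na_nat_le_one hna m) (norm_nonneg _)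
        _ = t * ‖(p:K)‖ := by ring
        _ = ‖(p:K)‖ * t := by ring
    have htp : t ^ p ≤ ‖(p : K)‖ * t := by
      rw [htdef, ← norm_pow, hkey, norm_neg]
      exact hnormsum
    by_contra hcon
    push_neg at hcon
    have ht1' : t = 1 := le_antisymm ht1 hcon
    rw [ht1'] at htp
    simp at htp
    linarith
  -- norms of ζ^k - 1
  have hgeom : ∀ k : ℕ, ‖ζ ^ k - 1‖ ≤ t := by
    intro k
    have h := geom_sum_mul ζ k
    rw [← h, norm_mul]
    calc ‖∑ i ∈ Finset.range k, ζ ^ i‖ * ‖ζ - 1‖ ≤ 1 * t := by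
          refine mul_le_mul ?_ le_rfl ht0 zero_le_one
          exact na_sum_le hna _ _ 1 zero_le_one fun i _ => (hnζpow i).le
      _ = t := one_mul t
  have hb : ∀ i : ZMod p, ‖ζ ^ i.val - 1‖ ≤ t := fun i => hgeom i.val
  -- term norm bound
  have hterm : ∀ (z a : K), ‖a‖ ≤ t → ∀ n : ℕ,
      ‖(n.factorial : K)⁻¹ * der^[n] z * (a * u) ^ n‖ ≤ ‖z‖ * t ^ n := by
    intro z a ha n
    rw [norm_mul ((n.factorial : K)⁻¹ * der^[n] z) ((a * u) ^ n), norm_pow,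
      norm_mul a u, mul_pow]
    calc ‖(n.factorial : K)⁻¹ * der^[n] z‖ * (‖a‖ ^ n * ‖u‖ ^ n)
        ≤ ((‖u‖⁻¹) ^ n * ‖z‖) * (t ^ n * ‖u‖ ^ n) := by
          refine mul_le_mul (hdiv n z) ?_ (by positivity) (by positivity)
          exact mul_le_mul_of_nonneg_right (pow_le_pow_left₀ (norm_nonneg a) ha n)
            (by positivity)
      _ = ‖z‖ * t ^ n * ((‖u‖⁻¹) ^ n * ‖u‖ ^ n) := by ring
      _ = ‖z‖ * t ^ n := by
          rw [← mul_pow, inv_mul_cancel₀ (ne_of_gt hu), one_pow, mul_one]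
  -- summability
  have hsummable : ∀ (z a : K), ‖a‖ ≤ t →
      Summable (fun n : ℕ => (n.factorial : K)⁻¹ * der^[n] z * (a * u) ^ n) := by
    intro z a ha
    refine Summable.of_norm_bounded (g := fun n => ‖z‖ * t ^ n)
      ((summable_geometric_of_lt_one ht0 htlt).mul_left ‖z‖) (hterm z a ha)
  -- ‖σ i z‖ ≤ ‖z‖
  have hσnorm : ∀ (i : ZMod p) (z : K), ‖σ i z‖ ≤ ‖z‖ := by
    intro i z
    rw [hσ i z]
    refine na_tsum_le hna _ ‖z‖ (norm_nonneg z) fun n => ?_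
    calc ‖(n.factorial : K)⁻¹ * der^[n] z * ((ζ ^ i.val - 1) * u) ^ n‖
        ≤ ‖z‖ * t ^ n := hterm z _ (hb i) n
      _ ≤ ‖z‖ * 1 := by
          refine mul_le_mul_of_nonneg_left (pow_le_one₀ ht0 ht1) (norm_nonneg z)
      _ = ‖z‖ := mul_one _
  -- continuity of σ i
  have hσcont : ∀ i : ZMod p, Continuous (σ i) := by
    intro i
    refine (LipschitzWith.of_dist_le_mul (K := 1) fun a b => ?_).continuous
    rw [dist_eq_norm, dist_eq_norm, NNReal.coe_one, one_mul, ← map_sub]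
    exact hσnorm i (a - b)
  -- σ fixes ζ
  have hσζ : ∀ j : ZMod p, σ j ζ = ζ := by
    intro j
    rw [hσ j ζ]
    rw [tsum_eq_single 0 ?_]
    · simp
    · intro n hn
      obtain ⟨m, rfl⟩ := Nat.exists_eq_succ_of_ne_zero hn
      rw [hiterζ m]
      ring
  -- σ j u = ζ^{j.val} * u
  have hσu : ∀ j : ZMod p, σ j u = ζ ^ (j : ZMod p).val * u := by
    intro j
    rw [hσ j u]
    rw [tsum_eq_sum (s := {0, 1}) ?_]
    · rw [Finset.sum_insert (by simp), Finset.sum_singleton]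
      simp [hdu, Nat.factorial]
      ring
    · intro n hn
      simp only [Finset.mem_insert, Finset.mem_singleton] at hn
      push_neg at hn
      obtain ⟨m, rfl⟩ : ∃ m, n = m + 2 := ⟨n - 2, by omega⟩
      have : der^[m + 2] u = 0 := by
        rw [show m + 2 = (m + 1) + 1 by ring, Function.iterate_succ_apply, hdu]
        have : der^[m + 1] (1:K) = 0 := by
          rw [Function.iterate_succ_apply, hder1, hiter0]
        exact this
      rw [this]
      ring
  -- ζ power mod p
  have hζmod : ∀ m : ℕ, ζ ^ (m % p) = ζ ^ m := by
    intro m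
    conv_rhs => rw [← Nat.div_add_mod m p]
    rw [pow_add, pow_mul, hζp, one_pow, one_mul]
  have hζadd : ∀ i j : ZMod p, ζ ^ (i + j).val = ζ ^ i.val * ζ ^ j.val := by
    intro i j
    rw [ZMod.val_add, hζmod, pow_add]
  -- the composition law
  have hcomp : ∀ (i j : ZMod p) (z : K), σ j (σ i z) = σ (i + j) z := by
    intro i j z
    obtain ⟨a, hadef⟩ : ∃ a : K, a = (ζ ^ i.val - 1) * ζ ^ j.val := ⟨_, rfl⟩
    obtain ⟨c, hcdef⟩ : ∃ c : K, c = ζ ^ j.val - 1 := ⟨_, rfl⟩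
    have hna' : ‖a‖ ≤ t := by
      rw [hadef, norm_mul, hnζpow, mul_one]
      exact hb i
    have hnc : ‖c‖ ≤ t := by rw [hcdef]; exact hb j
    obtain ⟨F, hFdef⟩ : ∃ F : ℕ × ℕ → K, F = fun mn =>
        (mn.1.factorial : K)⁻¹ *
          ((mn.2.factorial : K)⁻¹ * der^[mn.2 + mn.1] z * (c * u) ^ mn.2) * (a * u) ^ mn.1 :=
      ⟨_, rfl⟩
    -- summability of F
    have hFbound : ∀ mn : ℕ × ℕ, ‖F mn‖ ≤ ‖z‖ * (t ^ mn.1 * t ^ mn.2) := by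
      rintro ⟨m, n⟩
      have hfact : (m.factorial : K)⁻¹ * (n.factorial : K)⁻¹
          = ((n + m).choose n : K) * ((n + m).factorial : K)⁻¹ := by
        have h := Nat.choose_mul_factorial_mul_factorial (Nat.le_add_right n m)
        rw [Nat.add_sub_cancel_left] at h
        have h' : ((n + m).choose n : K) * (n.factorial : K) * (m.factorial : K)
            = ((n + m).factorial : K) := by exact_mod_cast congrArg Nat.cast h
        have hm0 : (m.factorial : K) ≠ 0 := Nat.cast_ne_zero.mpr m.factorial_ne_zero
        have hn0 : (n.factorial : K) ≠ 0 := Nat.cast_ne_zero.mpr n.factorial_ne_zero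
        have hnm0 : ((n + m).factorial : K) ≠ 0 :=
          Nat.cast_ne_zero.mpr (n + m).factorial_ne_zero
        field_simp
        linear_combination -h'
      have hF1 : F (m, n) = ((n + m).choose n : K) *
          (((n + m).factorial : K)⁻¹ * der^[n + m] z) * ((c * u) ^ n * (a * u) ^ m) := by
        simp only [hFdef]
        linear_combination (der^[n + m] z * (c * u) ^ n * (a * u) ^ m) * hfact
      have hF2 : ‖F (m, n)‖ = ‖(((n + m).choose n : ℕ) : K)‖ *
          ‖((n + m).factorial : K)⁻¹ * der^[n + m] z‖ *
          (‖c‖ ^ n * ‖u‖ ^ n * (‖a‖ ^ m * ‖u‖ ^ m)) := by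
        rw [hF1,
          norm_mul ((((n + m).choose n : ℕ) : K) * (((n + m).factorial : K)⁻¹ * der^[n + m] z))
            ((c * u) ^ n * (a * u) ^ m),
          norm_mul (((n + m).choose n : ℕ) : K) (((n + m).factorial : K)⁻¹ * der^[n + m] z),
          norm_mul ((c * u) ^ n) ((a * u) ^ m), norm_pow, norm_pow, norm_mul c u,
          norm_mul a u, mul_pow, mul_pow]
      rw [hF2]
      calc ‖(((n + m).choose n : ℕ) : K)‖ * ‖((n + m).factorial : K)⁻¹ * der^[n + m] z‖ *
            (‖c‖ ^ n * ‖u‖ ^ n * (‖a‖ ^ m * ‖u‖ ^ m))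
          ≤ 1 * ((‖u‖⁻¹) ^ (n + m) * ‖z‖) * (t ^ n * ‖u‖ ^ n * (t ^ m * ‖u‖ ^ m)) := by
            refine mul_le_mul (mul_le_mul (na_nat_le_one hna _) (hdiv _ z)
              (norm_nonneg _) zero_le_one) ?_ (by positivity) (by positivity)
            refine mul_le_mul (mul_le_mul (pow_le_pow_left₀ (norm_nonneg c) hnc n)
              le_rfl (by positivity) (by positivity)) (mul_le_mul
              (pow_le_pow_left₀ (norm_nonneg a) hna' m) le_rfl (by positivity)
              (by positivity)) (by positivity) (by positivity)
        _ = ‖z‖ * (t ^ m * t ^ n) * ((‖u‖⁻¹) ^ (n + m) * ‖u‖ ^ (n + m)) := by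
            rw [pow_add]; ring
        _ = ‖z‖ * (t ^ m * t ^ n) := by
            rw [← mul_pow, inv_mul_cancel₀ (ne_of_gt hu), one_pow, mul_one]
    have hFsummable : Summable F := by
      refine Summable.of_norm_bounded
        (g := fun mn : ℕ × ℕ => ‖z‖ * (t ^ mn.1 * t ^ mn.2)) ?_ hFbound
      have hgeo : Summable (fun n : ℕ => t ^ n) := summable_geometric_of_lt_one ht0 htlt
      exact ((hgeo.mul_of_nonneg hgeo (fun n => pow_nonneg ht0 n)
        (fun n => pow_nonneg ht0 n)).mul_left ‖z‖)
    -- step 1 : expand σ j (σ i z) as double sum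
    have hstep1 : σ j (σ i z) = ∑' m : ℕ, ∑' n : ℕ, F (m, n) := by
      rw [hσ i z]
      have hsum := hsummable z (ζ ^ i.val - 1) (hb i)
      have hmap := (hsum.hasSum.map (σ j) (hσcont j)).tsum_eq
      rw [← hmap]
      refine tsum_congr fun m => ?_
      -- σ j of a single term
      have : σ j ((m.factorial : K)⁻¹ * der^[m] z * ((ζ ^ i.val - 1) * u) ^ m)
          = (m.factorial : K)⁻¹ * σ j (der^[m] z) * (a * u) ^ m := by
        rw [map_mul, map_mul, map_pow, map_mul, map_sub, map_pow, map_one, hσζ j, hσu j]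
        rw [map_inv₀, map_natCast]
        rw [hadef]
        ring_nf
      rw [Function.comp_apply, this]
      rw [hσ j (der^[m] z)]
      have hiter : ∀ n : ℕ, der^[n] (der^[m] z) = der^[n + m] z := fun n =>
        (Function.iterate_add_apply der n m z).symm
      have : (∑' n : ℕ, (n.factorial : K)⁻¹ * der^[n] (der^[m] z) * ((ζ ^ j.val - 1) * u) ^ n)
          = ∑' n : ℕ, (n.factorial : K)⁻¹ * der^[n + m] z * (c * u) ^ n := by
        refine tsum_congr fun n => ?_
        rw [hiter n, hcdef]
      rw [this]
      rw [← tsum_mul_left, ← tsum_mul_right]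
      exact tsum_congr fun n => by rw [hFdef]
    -- step 2 : regroup the double sum along antidiagonals
    have hstep2 : (∑' m : ℕ, ∑' n : ℕ, F (m, n)) = ∑' N : ℕ, ∑ kl ∈ Finset.HasAntidiagonal.antidiagonal N, F kl := by
      rw [← Summable.tsum_prod hFsummable]
      rw [← Finset.HasAntidiagonal.sigmaAntidiagonalEquivProd.tsum_eq F]
      have hFe : Summable fun s : (Σ N : ℕ, {x // x ∈ Finset.HasAntidiagonal.antidiagonal N}) =>
          F (Finset.HasAntidiagonal.sigmaAntidiagonalEquivProd s) :=
        Finset.HasAntidiagonal.sigmaAntidiagonalEquivProd.summable_iff.mpr hFsummable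
      rw [Summable.tsum_sigma hFe]
      exact tsum_congr fun N => Finset.tsum_subtype (Finset.HasAntidiagonal.antidiagonal N) F
    -- step 3 : each antidiagonal sum is a term of σ (i+j)
    have hstep3 : ∀ N : ℕ, (∑ kl ∈ Finset.HasAntidiagonal.antidiagonal N, F kl)
        = (N.factorial : K)⁻¹ * der^[N] z * ((ζ ^ (i + j).val - 1) * u) ^ N := by
      intro N
      rw [Finset.Nat.sum_antidiagonal_eq_sum_range_succ_mk]
      have hac : ζ ^ (i + j).val - 1 = a + c := by
        rw [hζadd i j, hadef, hcdef]; ring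
      rw [hac, mul_pow, add_pow]
      rw [Finset.sum_mul, Finset.mul_sum]
      refine Finset.sum_congr rfl fun k hk => ?_
      rw [Finset.mem_range] at hk
      have hkN : k ≤ N := by omega
      have hfact : ((k.factorial : K)⁻¹ * ((N - k).factorial : K)⁻¹)
          = (N.choose k : K) * (N.factorial : K)⁻¹ := by
        have h := Nat.choose_mul_factorial_mul_factorial hkN
        have h' : ((N.choose k : K) * (k.factorial : K) * ((N - k).factorial : K))
            = (N.factorial : K) := by exact_mod_cast congrArg Nat.cast h
        have hm0 : (k.factorial : K) ≠ 0 := Nat.cast_ne_zero.mpr k.factorial_ne_zero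
        have hn0 : ((N - k).factorial : K) ≠ 0 := Nat.cast_ne_zero.mpr (N - k).factorial_ne_zero
        have hnm0 : (N.factorial : K) ≠ 0 := Nat.cast_ne_zero.mpr N.factorial_ne_zero
        field_simp
        linear_combination -h' 
      simp only [hFdef]
      have hsub : N - k + k = N := by omega
      have hupow : u ^ (N - k) * u ^ k = u ^ N := by
        rw [← pow_add]; congr 1
      rw [mul_pow c u, mul_pow a u, hsub, ← hupow]
      linear_combination (der^[N] z * c ^ (N - k) * u ^ (N - k) * a ^ k * u ^ k) * hfact
    calc σ j (σ i z) = ∑' m : ℕ, ∑' n : ℕ, F (m, n) := hstep1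
      _ = ∑' N : ℕ, ∑ kl ∈ Finset.HasAntidiagonal.antidiagonal N, F kl := hstep2
      _ = ∑' N : ℕ, (N.factorial : K)⁻¹ * der^[N] z * ((ζ ^ (i + j).val - 1) * u) ^ N :=
          tsum_congr hstep3
      _ = σ (i + j) z := (hσ (i + j) z).symm
  -- final assembly
  intro x hx
  refine ⟨∏ i : ZMod p, σ i x, ?_, ?_, ?_⟩
  · intro j
    rw [map_prod]
    calc ∏ i : ZMod p, σ j (σ i x) = ∏ i : ZMod p, σ (i + j) x :=
          Finset.prod_congr rfl fun i _ => hcomp i j x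
      _ = ∏ i : ZMod p, σ i x := Equiv.prod_comp (Equiv.addRight j) fun i => σ i x
  · rw [norm_prod]
    exact Finset.prod_le_one (fun i _ => norm_nonneg _)
      (fun i _ => (hσnorm i x).trans hx)
  · have hxp : x ^ p = ∏ _i : ZMod p, x := by
      rw [Finset.prod_const, Finset.card_univ, ZMod.card]
    rw [hxp]
    have hdiff : ∀ i : ZMod p, ‖x - σ i x‖ ≤ t := by
      intro i
      have hsum := hsummable x (ζ ^ i.val - 1) (hb i)
      rw [hσ i x, Summable.tsum_eq_zero_add hsum]
      beta_reduce
      rw [show ((Nat.factorial 0 : ℕ) : K)⁻¹ * der^[0] x * ((ζ ^ i.val - 1) * u) ^ 0 = x by simp,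
        sub_add_cancel_left, norm_neg]
      refine na_tsum_le hna _ t ht0 fun n => ?_
      refine le_trans (hterm x _ (hb i) (n + 1)) ?_
      calc ‖x‖ * t ^ (n + 1) ≤ 1 * (t * 1) := by
            rw [pow_succ']
            refine mul_le_mul hx (mul_le_mul le_rfl (pow_le_one₀ ht0 ht1)
              (by positivity) ht0) (by positivity) zero_le_one
        _ = t := by ring
    calc ‖(∏ _i : ZMod p, x) - ∏ i : ZMod p, σ i x‖ ≤ t := by
          refine na_prod_sub_prod hna _ _ _ t ht0 (fun i _ => hx)
            (fun i _ => (hσnorm i x).trans hx) (fun i _ => hdiff i)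
      _ < 1 := htlt
end

section
/- Let K be a complete nonarchimedean field of characteristic 0 with derivations ∂₁, …, ∂_m commuting and of rational type, and let ∂ = α₁∂₁ + ⋯ + α_m∂_m be a derivation extending to a K-algebra. Then for any ∂_J-differential module V and any x ∈ V, the formal power series identity T(x; ∂_J; T(u₁; ∂; δ) − u₁, …, T(u_m; ∂; δ) − u_m) = T(x; ∂; δ) holds in V ⊗_K K⟦δ⟧, where uⱼ are the rational parameters with ∂ᵢ(uⱼ) = δ_{ij} and αⱼ = ∂(uⱼ). -/
noncomputable section

/-- Iterated application `D₁^[e 1] ∘ ⋯ ∘ D_m^[e m]` of a family of commuting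
operators. -/
def iterMulti {V : Type*} {m : ℕ} (D : Fin m → V → V) (e : Fin m → ℕ) : V → V :=
  (List.finRange m).foldr (fun j f => (D j)^[e j] ∘ f) id

section auxlemmas

variable {V : Type*} {m : ℕ} (D : Fin m → V → V)

lemma foldr_congr (e e' : Fin m → ℕ) (l : List (Fin m)) (h : ∀ j ∈ l, e j = e' j) :
    l.foldr (fun j f => (D j)^[e j] ∘ f) id = l.foldr (fun j f => (D j)^[e' j] ∘ f) id := by
  induction l with
  | nil => rfl
  | cons i t ih =>
      simp only [List.foldr_cons]
      rw [h i List.mem_cons_self, ih (fun j hj => h j (List.mem_cons_of_mem i hj))]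

lemma foldr_comm (hc : ∀ i j, ∀ v, D i (D j v) = D j (D i v)) (e : Fin m → ℕ)
    (j : Fin m) (l : List (Fin m)) (y : V) :
    l.foldr (fun i f => (D i)^[e i] ∘ f) id (D j y)
      = D j (l.foldr (fun i f => (D i)^[e i] ∘ f) id y) := by
  induction l with
  | nil => rfl
  | cons i t ih =>
      simp only [List.foldr_cons, Function.comp_apply, ih]
      exact ((Function.Commute.iterate_right (fun v => hc j i v) (e i)) _).symm

lemma foldr_single (hc : ∀ i j, ∀ v, D i (D j v) = D j (D i v)) (e e' : Fin m → ℕ)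
    (j : Fin m) (he' : e' = e + Pi.single j 1) (l : List (Fin m))
    (hnd : l.Nodup) (hj : j ∈ l) (y : V) :
    l.foldr (fun i f => (D i)^[e' i] ∘ f) id y
      = l.foldr (fun i f => (D i)^[e i] ∘ f) id (D j y) := by
  induction l with
  | nil => simp at hj
  | cons i t ih =>
      simp only [List.foldr_cons, Function.comp_apply]
      rcases List.nodup_cons.mp hnd with ⟨hit, hndt⟩
      by_cases hij : i = j
      · subst hij
        rw [foldr_congr D e' e t
          (fun k hk => by
            have hki : k ≠ i := fun h => hit (h ▸ hk)
            simp [he', Pi.single_eq_of_ne hki])]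
        have hei : e' i = e i + 1 := by simp [he']
        rw [hei, Function.iterate_succ_apply, foldr_comm D hc e i t y]
      · have hjt : j ∈ t := by
          rcases List.mem_cons.mp hj with h | h
          · exact absurd h.symm hij
          · exact h
        have hei : e' i = e i := by simp [he', Pi.single_eq_of_ne hij]
        rw [hei, ih hndt hjt]

lemma iterMulti_single (hc : ∀ i j, ∀ v, D i (D j v) = D j (D i v)) (e : Fin m → ℕ)
    (j : Fin m) (y : V) :
    iterMulti D (e + Pi.single j 1) y = iterMulti D e (D j y) :=
  foldr_single D hc e _ j rfl _ (List.nodup_finRange m) (List.mem_finRange j) y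

lemma iterMulti_zero (y : V) : iterMulti D (fun _ => 0) y = y := by
  unfold iterMulti
  induction (List.finRange m) with
  | nil => rfl
  | cons i t ih => simp [ih]

end auxlemmas

lemma derivation_prod {R A : Type*} [CommSemiring R] [CommSemiring A] [Algebra R A]
    (d : Derivation R A A) {ι : Type*} [DecidableEq ι] (s : Finset ι) (f : ι → A) :
    d (∏ i ∈ s, f i) = ∑ i ∈ s, (∏ k ∈ s.erase i, f k) * d (f i) := by
  induction s using Finset.induction_on with
  | empty => simp
  | @insert a s ha ih =>
      rw [Finset.prod_insert ha, d.leibniz, ih, Finset.sum_insert ha, Finset.erase_insert ha]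
      rw [smul_eq_mul, smul_eq_mul, Finset.mul_sum]
      rw [add_comm]
      congr 1
      refine Finset.sum_congr rfl fun i hi => ?_
      have hia : a ≠ i := fun h => ha (h ▸ hi)
      have hanotin : a ∉ s.erase i := fun h => ha (Finset.mem_of_mem_erase h)
      rw [Finset.erase_insert_of_ne hia, Finset.prod_insert hanotin, mul_assoc]

lemma iterate_leibniz {K V : Type*} [Field K] [AddCommGroup V] [Module K V]
    (der : K → K) (DV : V → V)
    (hadd : ∀ x y : V, DV (x + y) = DV x + DV y)
    (hleib : ∀ (a : K) (z : V), DV (a • z) = a • DV z + der a • z) :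
    ∀ (n : ℕ) (a : K) (z : V), DV^[n] (a • z)
      = ∑ k ∈ Finset.range (n + 1), n.choose k • (der^[k] a • DV^[n - k] z) := by
  have hiter : ∀ (q : ℕ) (x y : V), DV^[q] (x + y) = DV^[q] x + DV^[q] y := by
    intro q
    induction q with
    | zero => intro x y; simp
    | succ q ihq =>
        intro x y
        rw [Function.iterate_succ_apply, hadd, ihq, ← Function.iterate_succ_apply,
          ← Function.iterate_succ_apply]
  intro n
  induction n with
  | zero => simp
  | succ n ih =>
      intro a z
      rw [Function.iterate_succ_apply, hleib, hiter, ih, ih]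
      have h1 : ∑ k ∈ Finset.range (n + 1), n.choose k • (der^[k] a • DV^[n - k] (DV z))
          = ∑ k ∈ Finset.range (n + 1), n.choose k • (der^[k] a • DV^[n + 1 - k] z) := by
        refine Finset.sum_congr rfl fun k hk => ?_
        have hk' : k ≤ n := Nat.lt_succ_iff.mp (Finset.mem_range.mp hk)
        rw [← Function.iterate_succ_apply, Nat.succ_sub hk']
      have h2 : ∑ k ∈ Finset.range (n + 1), n.choose k • (der^[k] (der a) • DV^[n - k] z)
          = ∑ k ∈ Finset.range (n + 1), n.choose k • (der^[k + 1] a • DV^[n + 1 - (k + 1)] z) := by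
        refine Finset.sum_congr rfl fun k _ => ?_
        rw [← Function.iterate_succ_apply, Nat.succ_sub_succ]
      rw [h1, h2]
      set X : ℕ → V := fun k => der^[k] a • DV^[n + 1 - k] z with hX
      have hrhs : ∑ k ∈ Finset.range (n + 1 + 1), (n+1).choose k • X k
          = ∑ k ∈ Finset.range (n + 1), (n.choose k • X (k+1) + n.choose (k+1) • X (k+1))
            + 1 • X 0 := by
        rw [Finset.sum_range_succ' (fun k => (n+1).choose k • X k) (n+1)]
        simp only [Nat.choose_succ_succ, add_nsmul, Nat.choose_zero_right]
      rw [hrhs, Finset.sum_add_distrib]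
      have hre : ∑ k ∈ Finset.range (n + 1), n.choose (k+1) • X (k+1) + 1 • X 0
          = ∑ k ∈ Finset.range (n + 1), n.choose k • X k := by
        have h0 : (1 : ℕ) • X 0 = n.choose 0 • X 0 := by simp
        rw [h0, ← Finset.sum_range_succ' (fun k => n.choose k • X k) (n+1),
          Finset.sum_range_succ]
        simp
      rw [← hre]
      abel

theorem key_aux
    (K : Type) [Field K] [CharZero K] (m : ℕ)
    (dK : Fin m → K → K)
    (u : Fin m → K)
    (huu : ∀ j, dK j (u j) = 1)
    (huz : ∀ i j, i ≠ j → dK i (u j) = 0)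
    (α : Fin m → K)
    (V : Type) [AddCommGroup V] [Module K V]
    (DJ : Fin m → V → V)
    (hDadd : ∀ j, ∀ x y : V, DJ j (x + y) = DJ j x + DJ j y)
    (hDleib : ∀ j, ∀ (a : K) (x : V), DJ j (a • x) = a • DJ j x + dK j a • x)
    (hDcomm : ∀ i j, ∀ x : V, DJ i (DJ j x) = DJ j (DJ i x))
    (der : K → K) (hder : ∀ a : K, der a = ∑ j, α j * dK j a)
    (DV : V → V) (hDV : ∀ x : V, DV x = ∑ j, α j • DJ j x)
    (Tser : Fin m → PowerSeries K)
    (hTser : ∀ j, Tser j = PowerSeries.mk fun n =>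
      if n = 0 then 0 else (n.factorial : K)⁻¹ * (der^[n] (u j))) :
    ∀ (n : ℕ) (y : V),
      ∑ e ∈ Fintype.piFinset (fun _ : Fin m => Finset.range (n + 1)),
        (PowerSeries.coeff n (∏ j, (Tser j) ^ (e j))) •
          ((∏ j, ((e j).factorial : K))⁻¹ • iterMulti DJ e y) =
      (n.factorial : K)⁻¹ • DV^[n] y := by
  -- preliminary facts
  have hDVadd : ∀ x y : V, DV (x + y) = DV x + DV y := by
    intro x y
    rw [hDV, hDV, hDV, ← Finset.sum_add_distrib]
    refine Finset.sum_congr rfl fun j _ => ?_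
    rw [hDadd, smul_add]
  have hiter : ∀ (q : ℕ) (x y : V), DV^[q] (x + y) = DV^[q] x + DV^[q] y := by
    intro q
    induction q with
    | zero => intro x y; simp
    | succ q ihq =>
        intro x y
        rw [Function.iterate_succ_apply, hDVadd, ihq, ← Function.iterate_succ_apply,
          ← Function.iterate_succ_apply]
  have hDVsum : ∀ (q : ℕ) (s : Finset (Fin m)) (f : Fin m → V),
      DV^[q] (∑ i ∈ s, f i) = ∑ i ∈ s, DV^[q] (f i) := by
    intro q s f
    exact map_sum (AddMonoidHom.mk' (DV^[q]) (fun x y => hiter q x y)) f s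
  have hLeib : ∀ (a : K) (z : V), DV (a • z) = a • DV z + der a • z := by
    intro a z
    rw [hDV (a • z), hder]
    have hterm : ∀ j : Fin m, α j • DJ j (a • z) = a • (α j • DJ j z) + (α j * dK j a) • z := by
      intro j
      rw [hDleib j a z, smul_add, smul_comm (α j) a, smul_smul (α j) (dK j a)]
    rw [Finset.sum_congr rfl fun j _ => hterm j, Finset.sum_add_distrib,
      ← Finset.smul_sum, ← Finset.sum_smul, ← hDV]
  have halpha : ∀ j, der (u j) = α j := by
    intro j
    rw [hder, Finset.sum_eq_single j (fun i _ hij => by rw [huz i j hij, mul_zero])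
      (by simp), huu, mul_one]
  have hXdvd : ∀ j, (PowerSeries.X : PowerSeries K) ∣ Tser j := by
    intro j
    rw [PowerSeries.X_dvd_iff, hTser, PowerSeries.constantCoeff_mk]
    simp
  have hvan : ∀ (N : ℕ) (e : Fin m → ℕ) (j : Fin m), N < e j → ∀ q : PowerSeries K,
      PowerSeries.coeff N ((∏ i, Tser i ^ e i) * q) = 0 := by
    intro N e j hlt q
    have h1 : (PowerSeries.X : PowerSeries K) ^ (e j) ∣ ∏ i, Tser i ^ e i :=
      dvd_trans (pow_dvd_pow_of_dvd (hXdvd j) _)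
        (Finset.dvd_prod_of_mem _ (Finset.mem_univ j))
    exact PowerSeries.X_pow_dvd_iff.mp (h1.mul_right q) N hlt
  have hcoeffdT : ∀ (j : Fin m) (k : ℕ),
      PowerSeries.coeff k (PowerSeries.derivative K (Tser j))
        = (k.factorial : K)⁻¹ * der^[k + 1] (u j) := by
    intro j k
    rw [PowerSeries.coeff_derivative, hTser, PowerSeries.coeff_mk,
      if_neg (Nat.succ_ne_zero k)]
    have h1 : (((k+1).factorial : ℕ) : K) = ((k : K) + 1) * (k.factorial : K) := by
      rw [Nat.factorial_succ]; push_cast; ring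
    have h2 : ((k : K) + 1) ≠ 0 := by
      have h2' : ((k + 1 : ℕ) : K) ≠ 0 := Nat.cast_ne_zero.mpr (Nat.succ_ne_zero k)
      push_cast at h2'
      exact h2'
    have h3 : ((k.factorial : ℕ) : K) ≠ 0 := Nat.cast_ne_zero.mpr (Nat.factorial_ne_zero k)
    field_simp [h1]
    rw [h1]
    ring
  intro n
  induction n using Nat.strong_induction_on with
  | _ n IH =>
    intro y
    rcases n with _ | n
    · -- base case n = 0
      have hE : Fintype.piFinset (fun _ : Fin m => Finset.range (0 + 1))
          = {fun _ => (0:ℕ)} := by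
        ext e
        simp [Fintype.mem_piFinset, funext_iff, Nat.lt_one_iff]
      rw [hE, Finset.sum_singleton]
      simp only [pow_zero, Finset.prod_const_one, Nat.factorial_zero, Nat.cast_one,
        inv_one, one_smul, Function.iterate_zero_apply, map_one]
      rw [iterMulti_zero]
      simp
    · -- inductive step: n+1
      have hne1 : ((n : K) + 1) ≠ 0 := by
        have h2' : ((n + 1 : ℕ) : K) ≠ 0 := Nat.cast_ne_zero.mpr (Nat.succ_ne_zero n)
        push_cast at h2'
        exact h2'
      -- rewrite RHS
      have hRHSfac : (((n+1).factorial : ℕ) : K)⁻¹ • DV^[n+1] y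
          = ((n : K)+1)⁻¹ • ((n.factorial : K)⁻¹ • DV^[n+1] y) := by
        rw [smul_smul, Nat.factorial_succ]
        push_cast
        rw [mul_inv]
      rw [hRHSfac]
      -- Step A/B rewrite of LHS
      have hstepA : ∀ e : Fin m → ℕ,
          PowerSeries.coeff (n+1) (∏ j, Tser j ^ e j)
            = ((n : K)+1)⁻¹ * PowerSeries.coeff n
                (PowerSeries.derivative K (∏ j, Tser j ^ e j)) := by
        intro e
        rw [PowerSeries.coeff_derivative]
        push_cast
        field_simp
      have hstepB : ∀ e : Fin m → ℕ,
          PowerSeries.coeff n (PowerSeries.derivative K (∏ j, Tser j ^ e j))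
            = ∑ j, (e j : K) * PowerSeries.coeff n
                ((∏ i ∈ Finset.univ.erase j, Tser i ^ e i) *
                  (Tser j ^ (e j - 1) * PowerSeries.derivative K (Tser j))) := by
        intro e
        rw [derivation_prod, map_sum]
        refine Finset.sum_congr rfl fun j _ => ?_
        rw [Derivation.leibniz_pow, smul_eq_mul, mul_smul_comm, map_nsmul, nsmul_eq_mul]
      have hL1 : ∑ e ∈ Fintype.piFinset (fun _ : Fin m => Finset.range (n + 1 + 1)),
            PowerSeries.coeff (n+1) (∏ j, Tser j ^ e j) •
              ((∏ j, ((e j).factorial : K))⁻¹ • iterMulti DJ e y)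
          = ((n : K)+1)⁻¹ • ∑ e ∈ Fintype.piFinset (fun _ : Fin m => Finset.range (n + 1 + 1)),
              ∑ j, ((e j : K) * PowerSeries.coeff n
                  ((∏ i ∈ Finset.univ.erase j, Tser i ^ e i) *
                    (Tser j ^ (e j - 1) * PowerSeries.derivative K (Tser j)))) •
                ((∏ i, ((e i).factorial : K))⁻¹ • iterMulti DJ e y) := by
        rw [Finset.smul_sum]
        refine Finset.sum_congr rfl fun e _ => ?_
        rw [hstepA e, hstepB e, mul_smul, Finset.sum_smul]
      rw [hL1]
      congr 1
      rw [Finset.sum_comm]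
      -- the per-j claim
      have hclaim : ∀ j : Fin m,
          ∑ e ∈ Fintype.piFinset (fun _ : Fin m => Finset.range (n + 1 + 1)),
            ((e j : K) * PowerSeries.coeff n
                ((∏ i ∈ Finset.univ.erase j, Tser i ^ e i) *
                  (Tser j ^ (e j - 1) * PowerSeries.derivative K (Tser j)))) •
              ((∏ i, ((e i).factorial : K))⁻¹ • iterMulti DJ e y)
          = ∑ k ∈ Finset.range (n+1),
              (((n - k).factorial : K)⁻¹ * der^[(n - k) + 1] (u j)) •
                ((k.factorial : K)⁻¹ • DV^[k] (DJ j y)) := by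
        intro j
        calc
          ∑ e ∈ Fintype.piFinset (fun _ : Fin m => Finset.range (n + 1 + 1)),
            ((e j : K) * PowerSeries.coeff n
                ((∏ i ∈ Finset.univ.erase j, Tser i ^ e i) *
                  (Tser j ^ (e j - 1) * PowerSeries.derivative K (Tser j)))) •
              ((∏ i, ((e i).factorial : K))⁻¹ • iterMulti DJ e y)
            = ∑ e ∈ (Fintype.piFinset (fun _ : Fin m => Finset.range (n + 1 + 1))).filter
                  (fun e => 1 ≤ e j),
                ((e j : K) * PowerSeries.coeff n
                    ((∏ i ∈ Finset.univ.erase j, Tser i ^ e i) *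
                      (Tser j ^ (e j - 1) * PowerSeries.derivative K (Tser j)))) •
                  ((∏ i, ((e i).factorial : K))⁻¹ • iterMulti DJ e y) := by
              refine (Finset.sum_filter_of_ne ?_).symm
              intro e _ hne0
              by_contra h
              push_neg at h
              have he0 : e j = 0 := by omega
              simp [he0] at hne0
          _ = ∑ f ∈ (Fintype.piFinset (fun _ : Fin m => Finset.range (n + 1 + 1))).filter
                  (fun f => f j ≤ n),
                (PowerSeries.coeff n ((∏ i, Tser i ^ f i) *
                    PowerSeries.derivative K (Tser j))) •
                  ((∏ i, ((f i).factorial : K))⁻¹ • iterMulti DJ f (DJ j y)) := by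
              refine Finset.sum_bij' (fun e _ => e - Pi.single j 1)
                (fun f _ => f + Pi.single j 1) ?_ ?_ ?_ ?_ ?_
              · intro e he
                simp only [Finset.mem_filter, Fintype.mem_piFinset, Finset.mem_range] at he ⊢
                obtain ⟨h1, h2⟩ := he
                refine ⟨fun i => ?_, ?_⟩
                · have hle : e i - (Pi.single j 1 : Fin m → ℕ) i ≤ e i := Nat.sub_le _ _
                  have := h1 i
                  simp only [Pi.sub_apply]
                  omega
                · simp only [Pi.sub_apply, Pi.single_eq_same]
                  have := h1 j
                  omega
              · intro f hf
                simp only [Finset.mem_filter, Fintype.mem_piFinset, Finset.mem_range] at hf ⊢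
                obtain ⟨h1, h2⟩ := hf
                refine ⟨fun i => ?_, ?_⟩
                · by_cases hij : i = j
                  · subst hij
                    simp only [Pi.add_apply, Pi.single_eq_same]
                    omega
                  · simp only [Pi.add_apply, Pi.single_eq_of_ne hij]
                    have := h1 i
                    omega
                · simp only [Pi.add_apply, Pi.single_eq_same]
                  omega
              · intro e he
                simp only [Finset.mem_filter] at he
                funext i
                by_cases hij : i = j
                · subst hij
                  simp only [Pi.add_apply, Pi.sub_apply, Pi.single_eq_same]
                  omega
                · simp [Pi.single_eq_of_ne hij]
              · intro f _
                funext i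
                by_cases hij : i = j
                · subst hij
                  simp only [Pi.add_apply, Pi.sub_apply, Pi.single_eq_same]
                  omega
                · simp [Pi.single_eq_of_ne hij]
              · intro e he
                simp only [Finset.mem_filter, Fintype.mem_piFinset, Finset.mem_range] at he
                obtain ⟨h1, hej⟩ := he
                have hfe : (e - Pi.single j 1) + Pi.single j 1 = e := by
                  funext i
                  by_cases hij : i = j
                  · subst hij
                    simp only [Pi.add_apply, Pi.sub_apply, Pi.single_eq_same]
                    omega
                  · simp [Pi.single_eq_of_ne hij]
                have hW : (∏ i ∈ Finset.univ.erase j, Tser i ^ e i) *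
                      (Tser j ^ (e j - 1) * PowerSeries.derivative K (Tser j))
                    = (∏ i, Tser i ^ ((e - Pi.single j 1 : Fin m → ℕ)) i) *
                        PowerSeries.derivative K (Tser j) := by
                  conv_rhs => rw [← Finset.mul_prod_erase Finset.univ _ (Finset.mem_univ j)]
                  have h1' : ((e - Pi.single j 1 : Fin m → ℕ)) j = e j - 1 := by
                    simp only [Pi.sub_apply, Pi.single_eq_same]
                  have h2' : ∀ i ∈ Finset.univ.erase j,
                      Tser i ^ ((e - Pi.single j 1 : Fin m → ℕ)) i = Tser i ^ e i := by
                    intro i hi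
                    have hij : i ≠ j := Finset.ne_of_mem_erase hi
                    simp [Pi.single_eq_of_ne hij]
                  rw [h1', Finset.prod_congr rfl h2']
                  ring
                have hIM : iterMulti DJ (e - Pi.single j 1) (DJ j y) = iterMulti DJ e y := by
                  rw [← iterMulti_single DJ hDcomm, hfe]
                have hgf : (e j : K) * (∏ i, ((e i).factorial : K))⁻¹
                    = (∏ i, ((((e - Pi.single j 1 : Fin m → ℕ)) i).factorial : K))⁻¹ := by
                  have hprod : (∏ i, ((e i).factorial : K))
                      = (e j : K) * ∏ i, ((((e - Pi.single j 1 : Fin m → ℕ)) i).factorial : K) := by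
                    conv_lhs => rw [← Finset.mul_prod_erase Finset.univ _ (Finset.mem_univ j)]
                    conv_rhs => rw [← Finset.mul_prod_erase Finset.univ _ (Finset.mem_univ j)]
                    have h2' : ∀ i ∈ Finset.univ.erase j,
                        ((((e - Pi.single j 1 : Fin m → ℕ)) i).factorial : K) = ((e i).factorial : K) := by
                      intro i hi
                      have hij : i ≠ j := Finset.ne_of_mem_erase hi
                      simp [Pi.single_eq_of_ne hij]
                    rw [Finset.prod_congr rfl h2']
                    have h4' : ((e - Pi.single j 1 : Fin m → ℕ)) j = e j - 1 := by
                      simp only [Pi.sub_apply, Pi.single_eq_same]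
                    have h3' : ((e j).factorial : K) = (e j : K) * (((e j - 1).factorial : K)) := by
                      exact_mod_cast (Nat.mul_factorial_pred (by omega)).symm
                    rw [h4', h3']
                    ring
                  rw [hprod, mul_inv]
                  have hne : (e j : K) ≠ 0 := Nat.cast_ne_zero.mpr (by omega)
                  rw [← mul_assoc, mul_inv_cancel₀ hne, one_mul]
                rw [hW, ← hIM, smul_smul, smul_smul]
                congr 1
                calc (e j : K) * PowerSeries.coeff n
                      ((∏ i, Tser i ^ ((e - Pi.single j 1 : Fin m → ℕ)) i) *
                        PowerSeries.derivative K (Tser j)) *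
                      (∏ i, ((e i).factorial : K))⁻¹
                    = PowerSeries.coeff n
                        ((∏ i, Tser i ^ ((e - Pi.single j 1 : Fin m → ℕ)) i) *
                          PowerSeries.derivative K (Tser j)) *
                        ((e j : K) * (∏ i, ((e i).factorial : K))⁻¹) := by ring
                  _ = _ := by rw [hgf]
          _ = ∑ f ∈ Fintype.piFinset (fun _ : Fin m => Finset.range (n + 1 + 1)),
                (PowerSeries.coeff n ((∏ i, Tser i ^ f i) *
                    PowerSeries.derivative K (Tser j))) •
                  ((∏ i, ((f i).factorial : K))⁻¹ • iterMulti DJ f (DJ j y)) := by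
              refine Finset.sum_filter_of_ne ?_
              intro f _ hne0
              by_contra h
              push_neg at h
              rw [hvan n f j h (PowerSeries.derivative K (Tser j)), zero_smul] at hne0
              exact hne0 rfl
          _ = ∑ f ∈ Fintype.piFinset (fun _ : Fin m => Finset.range (n + 1 + 1)),
                ∑ p ∈ Finset.HasAntidiagonal.antidiagonal n,
                  (PowerSeries.coeff p.1 (∏ i, Tser i ^ f i) *
                    PowerSeries.coeff p.2 (PowerSeries.derivative K (Tser j))) •
                    ((∏ i, ((f i).factorial : K))⁻¹ • iterMulti DJ f (DJ j y)) := by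
              refine Finset.sum_congr rfl fun f _ => ?_
              rw [PowerSeries.coeff_mul, Finset.sum_smul]
          _ = ∑ p ∈ Finset.HasAntidiagonal.antidiagonal n,
                ∑ f ∈ Fintype.piFinset (fun _ : Fin m => Finset.range (n + 1 + 1)),
                  (PowerSeries.coeff p.1 (∏ i, Tser i ^ f i) *
                    PowerSeries.coeff p.2 (PowerSeries.derivative K (Tser j))) •
                    ((∏ i, ((f i).factorial : K))⁻¹ • iterMulti DJ f (DJ j y)) :=
              Finset.sum_comm
          _ = ∑ p ∈ Finset.HasAntidiagonal.antidiagonal n,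
                ((p.2.factorial : K)⁻¹ * der^[p.2 + 1] (u j)) •
                  ((p.1.factorial : K)⁻¹ • DV^[p.1] (DJ j y)) := by
              refine Finset.sum_congr rfl fun p hp => ?_
              have hpn : p.1 + p.2 = n := Finset.HasAntidiagonal.mem_antidiagonal.mp hp
              have h1 : ∀ f : Fin m → ℕ,
                  (PowerSeries.coeff p.1 (∏ i, Tser i ^ f i) *
                    PowerSeries.coeff p.2 (PowerSeries.derivative K (Tser j))) •
                    ((∏ i, ((f i).factorial : K))⁻¹ • iterMulti DJ f (DJ j y))
                  = PowerSeries.coeff p.2 (PowerSeries.derivative K (Tser j)) •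
                      (PowerSeries.coeff p.1 (∏ i, Tser i ^ f i) •
                        ((∏ i, ((f i).factorial : K))⁻¹ • iterMulti DJ f (DJ j y))) := by
                intro f
                simp only [smul_smul]
                congr 1
                ring
              rw [Finset.sum_congr rfl fun f _ => h1 f, ← Finset.smul_sum]
              have hsub : Fintype.piFinset (fun _ : Fin m => Finset.range (p.1 + 1)) ⊆
                  Fintype.piFinset (fun _ : Fin m => Finset.range (n + 1 + 1)) :=
                Fintype.piFinset_subset _ _ (fun _ => Finset.range_subset_range.mpr (by omega))
              have hshrink : ∑ f ∈ Fintype.piFinset (fun _ : Fin m => Finset.range (p.1 + 1)),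
                    PowerSeries.coeff p.1 (∏ i, Tser i ^ f i) •
                      ((∏ i, ((f i).factorial : K))⁻¹ • iterMulti DJ f (DJ j y))
                  = ∑ f ∈ Fintype.piFinset (fun _ : Fin m => Finset.range (n + 1 + 1)),
                    PowerSeries.coeff p.1 (∏ i, Tser i ^ f i) •
                      ((∏ i, ((f i).factorial : K))⁻¹ • iterMulti DJ f (DJ j y)) := by
                refine Finset.sum_subset hsub ?_
                intro f _ hfnot
                simp only [Fintype.mem_piFinset, Finset.mem_range, not_forall, not_lt] at hfnot
                obtain ⟨i, hi⟩ := hfnot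
                have hz : PowerSeries.coeff p.1 (∏ i, Tser i ^ f i) = 0 := by
                  have := hvan p.1 f i (by omega) 1
                  rwa [mul_one] at this
                rw [hz, zero_smul]
              rw [← hshrink, IH p.1 (by omega) (DJ j y), hcoeffdT j p.2]
          _ = ∑ k ∈ Finset.range (n+1),
              (((n - k).factorial : K)⁻¹ * der^[(n - k) + 1] (u j)) •
                ((k.factorial : K)⁻¹ • DV^[k] (DJ j y)) :=
              Finset.Nat.sum_antidiagonal_eq_sum_range_succ_mk _ n
      rw [Finset.sum_congr rfl fun j _ => hclaim j]
      -- final: RHS matches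
      rw [Function.iterate_succ_apply, hDV y, hDVsum, Finset.smul_sum]
      refine Finset.sum_congr rfl fun j _ => ?_
      rw [iterate_leibniz der DV hDVadd hLeib n (α j) (DJ j y), Finset.smul_sum,
        ← Finset.sum_range_reflect]
      simp only [Nat.add_sub_cancel]
      refine Finset.sum_congr rfl fun k hk => ?_
      have hkn : k ≤ n := Nat.lt_succ_iff.mp (Finset.mem_range.mp hk)
      rw [Nat.sub_sub_self hkn, Function.iterate_succ_apply der k (u j), halpha j]
      rw [← Nat.cast_smul_eq_nsmul K (n.choose k), smul_smul, smul_smul, smul_smul]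
      congr 1
      have hfact : ((n.choose k : K)) * (k.factorial : K) * (((n-k).factorial : K))
          = ((n.factorial : K)) := by
        exact_mod_cast Nat.choose_mul_factorial_mul_factorial hkn
      have h3 : ((n.factorial : ℕ) : K) ≠ 0 := Nat.cast_ne_zero.mpr (Nat.factorial_ne_zero n)
      have h4 : ((k.factorial : ℕ) : K) ≠ 0 := Nat.cast_ne_zero.mpr (Nat.factorial_ne_zero k)
      have h5 : (((n-k).factorial : ℕ) : K) ≠ 0 :=
        Nat.cast_ne_zero.mpr (Nat.factorial_ne_zero (n-k))
      field_simp
      linear_combination (-1 : K) * der^[k] (α j) * hfact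
/-- **Change of derivation in Taylor series** (the tautological lemma of
Subsection S:multi-derivations).
Let `K` be a field of characteristic zero with commuting derivations
`dK 1, …, dK m` of rational type with parameters `u 1, …, u m`
(`dK j (u j) = 1`, `dK i (u j) = 0` for `i ≠ j`), let
`der = α 1 • dK 1 + ⋯ + α m • dK m` (so `α j = der (u j)`), and let `V` be a
`∂_J`-differential module with commuting actions `DJ j`, on which `der` acts
as `DV = Σ α j • DJ j`.  Then for every `x ∈ V` the formal power series
identity
`T(x; ∂_J; T(u₁; der; δ) − u₁, …, T(u_m; der; δ) − u_m) = T(x; der; δ)`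
holds in `V ⊗_K K⟦δ⟧`; equivalently, comparing coefficients of `δ^n`:
`Σ_e (coeff_n ∏_j ((T(u_j; der; δ) − u_j))^{e_j}) • (∂_J^e x)/(e!) = (der^n x)/n!`
for every `n`. -/
theorem taylor_series_change_of_derivation
    (K : Type) [Field K] [CharZero K] (m : ℕ)
    (dK : Fin m → K → K)
    (hadd : ∀ j, ∀ x y : K, dK j (x + y) = dK j x + dK j y)
    (hmul : ∀ j, ∀ x y : K, dK j (x * y) = x * dK j y + y * dK j x)
    (hcommK : ∀ i j, ∀ x : K, dK i (dK j x) = dK j (dK i x))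
    (u : Fin m → K)
    (huu : ∀ j, dK j (u j) = 1)
    (huz : ∀ i j, i ≠ j → dK i (u j) = 0)
    (α : Fin m → K)
    (V : Type) [AddCommGroup V] [Module K V]
    (DJ : Fin m → V → V)
    (hDadd : ∀ j, ∀ x y : V, DJ j (x + y) = DJ j x + DJ j y)
    (hDleib : ∀ j, ∀ (a : K) (x : V), DJ j (a • x) = a • DJ j x + dK j a • x)
    (hDcomm : ∀ i j, ∀ x : V, DJ i (DJ j x) = DJ j (DJ i x))
    -- the derivation `der = Σ α j · dK j` on `K` and its action `DV` on `V`
    (der : K → K) (hder : ∀ a : K, der a = ∑ j, α j * dK j a)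
    (DV : V → V) (hDV : ∀ x : V, DV x = ∑ j, α j • DJ j x)
    -- the Taylor series `T(u_j; der; δ) − u_j ∈ K⟦δ⟧`
    (Tser : Fin m → PowerSeries K)
    (hTser : ∀ j, Tser j = PowerSeries.mk fun n =>
      if n = 0 then 0 else (n.factorial : K)⁻¹ * (der^[n] (u j)))
    (x : V) :
    ∀ n : ℕ,
      ∑ e ∈ Fintype.piFinset (fun _ : Fin m => Finset.range (n + 1)),
        (PowerSeries.coeff n (∏ j, (Tser j) ^ (e j))) •
          ((∏ j, ((e j).factorial : K))⁻¹ • iterMulti DJ e x) =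
      (n.factorial : K)⁻¹ • DV^[n] x := by
  intro n
  exact key_aux K m dK u huu huz α V DJ hDadd hDleib hDcomm der hder DV hDV Tser hTser n x

end
end
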